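/- Let λ > 0 and P > 0 be real numbers. Then ∫_0^∞ λ e^{−λh} · (ln(1 + P h) − P h/(1 + P h)) dh = (1 + λ/P) · e^{λ/P} · ∫_{λ/P}^∞ (e^{−t}/t) dt − 1. (Equivalently, with the exponential integral Ei(−x) = −∫_x^∞ e^{−t}/t dt for x > 0, the left-hand side equals −[1 + (1 + λ/P)·e^{λ/P}·Ei(−λ/P)], which is the function f(P) appearing in Corollary 1.) -/

import Mathlib

open MeasureTheory Set Filter Real Topology

lemma intOn_exp_div {a : ℝ} (ha : 0 < a) :
    IntegrableOn (fun t => Real.exp (-t) / t) (Set.Ioi a) := by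
  have hmeas : AEStronglyMeasurable (fun t => Real.exp (-t) / t)
      (volume.restrict (Set.Ioi a)) :=
    ((Real.measurable_exp.comp measurable_neg).div measurable_id).aestronglyMeasurable
  have hint : IntegrableOn (fun t => Real.exp (-t) / a) (Set.Ioi a) := by
    have := (exp_neg_integrableOn_Ioi a (zero_lt_one)).div_const a
    simpa [IntegrableOn] using this
  refine Integrable.mono' hint hmeas ?_
  filter_upwards [ae_restrict_mem measurableSet_Ioi] with t ht
  have ht0 : 0 < t := ha.trans ht
  rw [Real.norm_eq_abs, abs_div, abs_of_pos (Real.exp_pos _), abs_of_pos ht0]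
  exact div_le_div_of_nonneg_left (Real.exp_pos _).le ha (le_of_lt ht)

lemma intOn_exp_mul (a : ℝ) (ha : 0 ≤ a) :
    IntegrableOn (fun t => Real.exp (-t) * t) (Set.Ioi a) := by
  have h := Real.GammaIntegral_convergent (by norm_num : (0:ℝ) < 2)
  have h' : IntegrableOn (fun t => Real.exp (-t) * t) (Set.Ioi (0:ℝ)) := by
    refine h.congr_fun (fun x hx => ?_) measurableSet_Ioi
    norm_num
  exact h'.mono_set (Set.Ioi_subset_Ioi ha)

lemma intOn_exp_log {a : ℝ} (ha : 0 < a) :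
    IntegrableOn (fun t => Real.exp (-t) * Real.log t) (Set.Ioi a) := by
  have hmeas : AEStronglyMeasurable (fun t => Real.exp (-t) * Real.log t)
      (volume.restrict (Set.Ioi a)) :=
    ((Real.measurable_exp.comp measurable_neg).mul Real.measurable_log).aestronglyMeasurable
  have hint : IntegrableOn
      (fun t => Real.exp (-t) * t + |Real.log a| * Real.exp (-t)) (Set.Ioi a) := by
    refine (intOn_exp_mul a ha.le).add ?_
    have := (exp_neg_integrableOn_Ioi a (zero_lt_one)).const_mul |Real.log a|
    simpa [IntegrableOn] using this
  refine Integrable.mono' hint hmeas ?_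
  filter_upwards [ae_restrict_mem measurableSet_Ioi] with t ht
  have ht0 : 0 < t := ha.trans ht
  rw [Real.norm_eq_abs, abs_mul, abs_of_pos (Real.exp_pos _)]
  have hlog : |Real.log t| ≤ t + |Real.log a| := by
    rcases le_or_gt 1 t with h1 | h1
    · have h2 : 0 ≤ Real.log t := Real.log_nonneg h1
      rw [abs_of_nonneg h2]
      have := Real.log_le_sub_one_of_pos ht0
      nlinarith [abs_nonneg (Real.log a)]
    · have h2 : Real.log t < 0 := Real.log_neg ht0 h1
      rw [abs_of_neg h2]
      have h3 : Real.log a ≤ Real.log t := Real.log_le_log ha ht.le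
      have h4 : -Real.log a ≤ |Real.log a| := neg_le_abs _
      linarith
  calc Real.exp (-t) * |Real.log t| ≤ Real.exp (-t) * (t + |Real.log a|) := by
        exact mul_le_mul_of_nonneg_left hlog (Real.exp_pos _).le
    _ = Real.exp (-t) * t + |Real.log a| * Real.exp (-t) := by ring

lemma key_ibp {a : ℝ} (ha : 0 < a) :
    ∫ t in Set.Ioi a, (Real.exp (-t) * Real.log t - Real.exp (-t) / t)
      = Real.exp (-a) * Real.log a := by
  have hderiv : ∀ x ∈ Set.Ici a,
      HasDerivAt (fun t => -(Real.exp (-t) * Real.log t))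
        (Real.exp (-x) * Real.log x - Real.exp (-x) / x) x := by
    intro x hx
    have hx0 : 0 < x := lt_of_lt_of_le ha hx
    have h1 : HasDerivAt (fun t : ℝ => Real.exp (-t)) (Real.exp (-x) * (-1)) x :=
      (hasDerivAt_neg x).exp
    have h2 : HasDerivAt Real.log x⁻¹ x := Real.hasDerivAt_log hx0.ne'
    have h3 := (h1.mul h2).neg
    exact h3.congr_deriv (by ring)
  have hint : IntegrableOn
      (fun t => Real.exp (-t) * Real.log t - Real.exp (-t) / t) (Set.Ioi a) :=
    (intOn_exp_log ha).sub (intOn_exp_div ha)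
  have htend : Tendsto (fun t => -(Real.exp (-t) * Real.log t)) atTop (𝓝 0) := by
    rw [← neg_zero]
    refine Tendsto.neg ?_
    have hb := Real.tendsto_pow_mul_exp_neg_atTop_nhds_zero 1
    simp only [pow_one] at hb
    refine squeeze_zero_norm' ?_ hb
    filter_upwards [eventually_ge_atTop (1:ℝ)] with t ht
    rw [Real.norm_eq_abs, abs_mul, abs_of_pos (Real.exp_pos _),
      abs_of_nonneg (Real.log_nonneg ht)]
    have h1 : Real.log t ≤ t := (Real.log_le_sub_one_of_pos (by linarith)).trans (by linarith)
    nlinarith [Real.exp_pos (-t)]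
  have := integral_Ioi_of_hasDerivAt_of_tendsto' hderiv hint htend
  rw [this]; ring

open MeasureTheory in
/-- Expected KL divergence under an exponentially distributed channel gain (`M = 1`):
`∫_0^∞ λe^{−λh}(ln(1+Ph) − Ph/(1+Ph)) dh = (1 + λ/P)·e^{λ/P}·∫_{λ/P}^∞ e^{−t}/t dt − 1`,
which equals `−[1 + (1 + λ/P)·e^{λ/P}·Ei(−λ/P)]`, the function `f(P)` of Corollary 1. -/
theorem expected_klDiv_exponential (lam P : ℝ) (hlam : 0 < lam) (hP : 0 < P) :
    (∫ h in Set.Ioi (0 : ℝ),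
        lam * Real.exp (-(lam * h)) *
          (Real.log (1 + P * h) - P * h / (1 + P * h)))
      = (1 + lam / P) * Real.exp (lam / P) *
          (∫ t in Set.Ioi (lam / P), Real.exp (-t) / t) - 1 := by
  set a := lam / P with ha_def
  have ha : 0 < a := div_pos hlam hP
  set g : ℝ → ℝ := fun t => Real.exp (a - t) * (Real.log (t / a) - (t - a) / t) with hg_def
  -- pointwise equality between the original integrand and the substituted one
  have stepA : ∀ h ∈ Set.Ioi (0:ℝ),
      lam * Real.exp (-(lam * h)) * (Real.log (1 + P * h) - P * h / (1 + P * h))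
        = g (a + lam * h) * lam := by
    intro h hh
    have hh0 : 0 < h := hh
    have h1 : (0:ℝ) < 1 + P * h := by positivity
    have h2 : (0:ℝ) < a + lam * h := by positivity
    have e1 : a - (a + lam * h) = -(lam * h) := by ring
    have e2 : (a + lam * h) / a = 1 + P * h := by
      rw [ha_def]; field_simp
    have e3 : (a + lam * h - a) / (a + lam * h) = P * h / (1 + P * h) := by
      rw [ha_def]
      rw [div_eq_div_iff (by rw [← ha_def]; exact h2.ne') h1.ne']
      field_simp
      ring
    simp only [hg_def, e1, e2, e3]
    ring
  -- integrability of the original integrand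
  have stepB : IntegrableOn
      (fun h => lam * Real.exp (-(lam * h)) * (Real.log (1 + P * h) - P * h / (1 + P * h)))
      (Set.Ioi (0:ℝ)) := by
    have hD1 : IntegrableOn (fun h => Real.exp (-(lam * h)) * (lam * h)) (Set.Ioi (0:ℝ)) := by
      have h0 := (integrableOn_Ioi_comp_mul_left_iff
        (fun t => Real.exp (-t) * t) 0 hlam).mpr (by simpa using intOn_exp_mul 0 le_rfl)
      simpa using h0
    have hD : IntegrableOn
        (fun h => P * (Real.exp (-(lam * h)) * (lam * h)) + lam * Real.exp (-(lam * h)))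
        (Set.Ioi (0:ℝ)) := by
      refine (hD1.const_mul P).add ?_
      have := (exp_neg_integrableOn_Ioi 0 hlam).const_mul lam
      simpa [neg_mul] using this
    have hmeas : AEStronglyMeasurable
        (fun h => lam * Real.exp (-(lam * h)) * (Real.log (1 + P * h) - P * h / (1 + P * h)))
        (volume.restrict (Set.Ioi (0:ℝ))) := by
      apply Measurable.aestronglyMeasurable
      apply Measurable.mul
      · exact (measurable_const.mul
          (Real.measurable_exp.comp (measurable_const.mul measurable_id).neg))
      · exact (Real.measurable_log.comp (measurable_const.add (measurable_const.mul
          measurable_id))).sub ((measurable_const.mul measurable_id).div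
          (measurable_const.add (measurable_const.mul measurable_id)))
    refine Integrable.mono' hD hmeas ?_
    filter_upwards [ae_restrict_mem measurableSet_Ioi] with h hh
    have hh0 : 0 < h := hh
    have h1 : (0:ℝ) < 1 + P * h := by positivity
    have hA : |Real.log (1 + P * h)| ≤ P * h := by
      rw [abs_of_nonneg (Real.log_nonneg (by nlinarith))]
      have := Real.log_le_sub_one_of_pos h1
      linarith
    have hB : |P * h / (1 + P * h)| ≤ 1 := by
      rw [abs_of_nonneg (by positivity)]
      rw [div_le_one h1]
      linarith
    have habs : |Real.log (1 + P * h) - P * h / (1 + P * h)| ≤ P * h + 1 :=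
      (abs_sub _ _).trans (by linarith)
    rw [Real.norm_eq_abs, abs_mul, abs_mul, abs_of_pos hlam, abs_of_pos (Real.exp_pos _)]
    calc lam * Real.exp (-(lam * h)) * |Real.log (1 + P * h) - P * h / (1 + P * h)|
        ≤ lam * Real.exp (-(lam * h)) * (P * h + 1) := by
          exact mul_le_mul_of_nonneg_left habs (by positivity)
      _ = P * (Real.exp (-(lam * h)) * (lam * h)) + lam * Real.exp (-(lam * h)) := by ring
  -- pointwise rewriting of g on Ioi a
  have hg_eq : ∀ t ∈ Set.Ioi a, g t
      = Real.exp a * ((Real.exp (-t) * Real.log t - Real.exp (-t) / t)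
          - Real.log a * Real.exp (-t) - Real.exp (-t) + (1 + a) * (Real.exp (-t) / t)) := by
    intro t ht
    have ht0 : 0 < t := ha.trans ht
    simp only [hg_def]
    rw [Real.log_div ht0.ne' ha.ne', sub_eq_add_neg a t, Real.exp_add]
    field_simp
    ring
  -- integrability of g on Ici a
  have stepC : IntegrableOn g (Set.Ici a) := by
    rw [integrableOn_Ici_iff_integrableOn_Ioi]
    have e_int : IntegrableOn (fun t => Real.exp (-t)) (Set.Ioi a) := by
      simpa using exp_neg_integrableOn_Ioi a zero_lt_one
    have hI : IntegrableOn
        (fun t => Real.exp a * ((Real.exp (-t) * Real.log t - Real.exp (-t) / t)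
          - Real.log a * Real.exp (-t) - Real.exp (-t) + (1 + a) * (Real.exp (-t) / t)))
        (Set.Ioi a) := by
      refine Integrable.const_mul ?_ _
      exact ((((intOn_exp_log ha).sub (intOn_exp_div ha)).sub
        (e_int.const_mul _)).sub e_int).add ((intOn_exp_div ha).const_mul _)
    exact hI.congr_fun (fun t ht => (hg_eq t ht).symm) measurableSet_Ioi
  -- continuity of g on Ioi a
  have hg_cont : ContinuousOn g (Set.Ioi a) := by
    intro t ht
    have ht0 : 0 < t := ha.trans ht
    apply ContinuousAt.continuousWithinAt
    apply ContinuousAt.mul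
    · exact Real.continuous_exp.continuousAt.comp
        ((continuous_const.sub continuous_id).continuousAt)
    · apply ContinuousAt.sub
      · exact (continuous_id.div_const a).continuousAt.log
          (by simpa using div_ne_zero ht0.ne' ha.ne')
      · exact ContinuousAt.div ((continuous_id.sub continuous_const).continuousAt)
          continuous_id.continuousAt ht0.ne'
  -- change of variables
  have himg1 : (fun h : ℝ => a + lam * h) '' Set.Ioi 0 ⊆ Set.Ioi a := by
    rintro _ ⟨x, hx, rfl⟩
    have : (0:ℝ) < x := hx
    simp only [Set.mem_Ioi]
    nlinarith
  have himg2 : (fun h : ℝ => a + lam * h) '' Set.Ici 0 ⊆ Set.Ici a := by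
    rintro _ ⟨x, hx, rfl⟩
    have : (0:ℝ) ≤ x := hx
    simp only [Set.mem_Ici]
    nlinarith
  have hsub := MeasureTheory.integral_comp_mul_deriv_Ioi
    (f := fun h : ℝ => a + lam * h) (f' := fun _ => lam) (g := g) (a := 0)
    ((continuous_const.add (continuous_const.mul continuous_id)).continuousOn)
    (tendsto_atTop_add_const_left _ a (tendsto_id.const_mul_atTop hlam))
    (fun x _ => by
      simpa using (((hasDerivAt_id x).const_mul lam).const_add a).hasDerivWithinAt)
    (hg_cont.mono himg1) (stepC.mono_set himg2)
    (by
      rw [integrableOn_Ici_iff_integrableOn_Ioi]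
      simpa using stepB.congr_fun (fun h hh => stepA h hh) measurableSet_Ioi)
  rw [MeasureTheory.setIntegral_congr_fun measurableSet_Ioi
    (fun h hh => stepA h hh)]
  simp only [Function.comp] at hsub
  rw [hsub]
  rw [show a + lam * 0 = a by ring]
  -- evaluate the integral of g over Ioi a
  rw [MeasureTheory.setIntegral_congr_fun measurableSet_Ioi (fun t ht => hg_eq t ht)]
  rw [MeasureTheory.integral_const_mul]
  have e_int : IntegrableOn (fun t => Real.exp (-t)) (Set.Ioi a) := by
    simpa using exp_neg_integrableOn_Ioi a zero_lt_one
  have i1 : IntegrableOn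
      (fun t => Real.exp (-t) * Real.log t - Real.exp (-t) / t) (Set.Ioi a) :=
    (intOn_exp_log ha).sub (intOn_exp_div ha)
  have hB : IntegrableOn (fun t => Real.log a * Real.exp (-t)) (Set.Ioi a) :=
    e_int.const_mul _
  have hD : IntegrableOn (fun t => (1 + a) * (Real.exp (-t) / t)) (Set.Ioi a) :=
    (intOn_exp_div ha).const_mul _
  have hX2 : IntegrableOn (fun t => Real.exp (-t) * Real.log t - Real.exp (-t) / t
      - Real.log a * Real.exp (-t)) (Set.Ioi a) := i1.sub hB
  have hX : IntegrableOn (fun t => Real.exp (-t) * Real.log t - Real.exp (-t) / t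
      - Real.log a * Real.exp (-t) - Real.exp (-t)) (Set.Ioi a) := hX2.sub e_int
  rw [MeasureTheory.integral_add hX hD]
  rw [MeasureTheory.integral_sub hX2 e_int]
  rw [MeasureTheory.integral_sub i1 hB]
  rw [key_ibp ha, MeasureTheory.integral_const_mul, MeasureTheory.integral_const_mul,
    integral_exp_neg_Ioi]
  rw [Real.exp_neg]
  field_simp
  ring
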